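/- On the star S_n with attack duration m = 2, for any end-reflecting Markovian patrol with center-to-end probability p ∈ (0, 1/n), the minimal over delays d ≥ 1 of the interception probability is attained at d = 2 and equals (1 - n·p)·p/(1 - p); in particular, the sequence q_d defined by q_1 = 1 and q_{d+1} = (1 - n·p·q_d)/(1 - p·q_d) is minimized over d ≥ 1 at d = 2, where q_2 = (1 - n·p)/(1 - p). -/
import Mathlib


theorem stmt_17 (n : ℕ) (hn : 2 ≤ n) (p : ℝ) (hp : 0 < p) (hpn : p < 1 / n)
    (q : ℕ → ℝ) (hq1 : q 1 = 1)
    (hrec : ∀ d : ℕ, 1 ≤ d → q (d + 1) = (1 - n * p * q d) / (1 - p * q d)) :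
    q 2 = (1 - n * p) / (1 - p) ∧
    (∀ d : ℕ, 1 ≤ d → q 2 ≤ q d) ∧
    (∀ d : ℕ, 1 ≤ d → p * q 2 ≤ p * q d) ∧
    p * q 2 = (1 - n * p) * p / (1 - p) := by
  have hn2 : (2:ℝ) ≤ (n:ℝ) := by exact_mod_cast hn
  have hn0 : (0:ℝ) < n := by linarith
  have hnp : (n:ℝ) * p < 1 := by
    have := (lt_div_iff₀ hn0).mp hpn
    linarith [this]
  have hp1 : p < 1 := by nlinarith
  set A := (1 - (n:ℝ) * p) / (1 - p) with hA
  have h1p : (0:ℝ) < 1 - p := by linarith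
  have hA1 : A ≤ 1 := by
    rw [hA, div_le_one h1p]; nlinarith
  have hA0 : 0 < A := div_pos (by nlinarith) h1p
  have key : ∀ d, 1 ≤ d → A ≤ q d ∧ q d ≤ 1 := by
    intro d hd
    induction d, hd using Nat.le_induction with
    | base => rw [hq1]; exact ⟨hA1, le_refl 1⟩
    | succ d hd ih =>
      obtain ⟨h1, h2⟩ := ih
      rw [hrec d hd]
      have hq0 : 0 < q d := lt_of_lt_of_le hA0 h1
      have hden : 0 < 1 - p * q d := by nlinarith
      constructor
      · rw [hA, div_le_div_iff₀ h1p hden]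
        nlinarith [mul_nonneg (mul_nonneg hp.le (sub_nonneg.mpr h2)) (by linarith : (0:ℝ) ≤ (n:ℝ) - 1)]
      · rw [div_le_one hden]; nlinarith [mul_pos hp hq0]
  have hq2 : q 2 = A := by
    have := hrec 1 (le_refl 1)
    rw [hq1, mul_one, mul_one] at this
    rw [this, hA]
  refine ⟨hq2, ?_, ?_, ?_⟩
  · intro d hd; rw [hq2]; exact (key d hd).1
  · intro d hd
    exact mul_le_mul_of_nonneg_left (by rw [hq2]; exact (key d hd).1) hp.le
  · rw [hq2, hA]; ring
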